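/- Let F : 2^E → ℝ≥0 be monotone and submodular with F(∅) = 0, let e₁,…,e_a be the greedy-chosen elements in order, and let q₁,…,q_b be additional elements together with an assignment τ from {1,…,b} to {1,…,a} such that each index i ∈ {1,…,a} has at most Δ preimages and, for each j, at the step when e_{τ(j)} was chosen, the marginal gain of e_{τ(j)} was at least that of q_j. Then F({e₁,…,e_a} ∪ {q₁,…,q_b}) ≤ (1 + Δ)·F({e₁,…,e_a}). -/

import Mathlib

/-- charging argument with multiplicity — if each extra element `q j` is charged
to a greedy element whose marginal gain at its step dominates that of `q j`, and each greedy
element is charged at most `Δ` times, then the combined set has value at most `(1 + Δ)` times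
the greedy value. -/
theorem stmt_18 {E : Type} [DecidableEq E]
    (F : Finset E → ℝ) (hFnn : ∀ S, 0 ≤ F S) (hF0 : F ∅ = 0)
    (hFmono : ∀ S T : Finset E, S ⊆ T → F S ≤ F T)
    (hFsub : ∀ S T : Finset E, S ⊆ T → ∀ x : E,
      F (insert x T) - F T ≤ F (insert x S) - F S)
    (a b Δ : ℕ) (e : Fin a → E) (q : Fin b → E)
    (hInjE : Function.Injective e)
    (τ : Fin b → Fin a)
    (hτ : ∀ i : Fin a, (Finset.univ.filter (fun j : Fin b => τ j = i)).card ≤ Δ)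
    (pre : Fin a → Finset E)
    (hpre : ∀ i : Fin a, pre i = (Finset.univ.filter (fun t : Fin a => (t : ℕ) < (i : ℕ))).image e)
    (hcand : ∀ j : Fin b, q j ∉ pre (τ j))
    (hgain : ∀ j : Fin b,
      F (insert (q j) (pre (τ j))) - F (pre (τ j)) ≤
        F (insert (e (τ j)) (pre (τ j))) - F (pre (τ j))) :
    F (Finset.univ.image e ∪ Finset.univ.image q) ≤ (1 + (Δ : ℝ)) * F (Finset.univ.image e) := by
  classical
  set G : Finset E := Finset.univ.image e with hG
  -- prefix sets as a function of a natural number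
  set P : ℕ → Finset E := fun k => (Finset.univ.filter (fun t : Fin a => (t : ℕ) < k)).image e
    with hP
  have hP0 : P 0 = ∅ := by simp [hP]
  have hPa : P a = G := by
    simp only [hP, hG]
    congr 1
    ext t
    simp [t.isLt]
  have hPsucc : ∀ i : Fin a, P ((i : ℕ) + 1) = insert (e i) (pre i) := by
    intro i
    rw [hpre i]
    simp only [hP]
    rw [show (Finset.univ.filter (fun t : Fin a => (t : ℕ) < (i : ℕ) + 1))
        = insert i (Finset.univ.filter (fun t : Fin a => (t : ℕ) < (i : ℕ))) by
      ext t
      simp only [Finset.mem_filter, Finset.mem_insert, Finset.mem_univ, true_and, Fin.ext_iff]; omega]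
    rw [Finset.image_insert]
  have hPpre : ∀ i : Fin a, P (i : ℕ) = pre i := by
    intro i; rw [hpre i]
  -- gains
  set g : Fin a → ℝ := fun i => F (insert (e i) (pre i)) - F (pre i) with hg
  have hgnn : ∀ i, 0 ≤ g i := by
    intro i
    have := hFmono (pre i) (insert (e i) (pre i)) (Finset.subset_insert _ _)
    simp [hg]; linarith
  have hsum_g : ∑ i : Fin a, g i = F G := by
    have : ∑ i : Fin a, g i = ∑ k ∈ Finset.range a, (F (P (k + 1)) - F (P k)) := by
      rw [← Fin.sum_univ_eq_sum_range]
      refine Finset.sum_congr rfl fun i _ => ?_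
      rw [hPsucc i, hPpre i]
    rw [this, Finset.sum_range_sub (fun k => F (P k)), hP0, hPa, hF0, sub_zero]
  -- pre i ⊆ G
  have hpreG : ∀ i : Fin a, pre i ⊆ G := by
    intro i
    rw [hpre i, hG]
    exact Finset.image_subset_image (Finset.filter_subset _ _)
  -- the sets G ∪ {q_0, ..., q_{k-1}}
  set Q : ℕ → Finset E := fun k => G ∪ (Finset.univ.filter (fun j : Fin b => (j : ℕ) < k)).image q
    with hQ
  have hQ0 : Q 0 = G := by simp [hQ]
  have hQb : Q b = G ∪ Finset.univ.image q := by
    simp only [hQ]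
    congr 2
    ext t
    simp [t.isLt]
  have hQsucc : ∀ j : Fin b, Q ((j : ℕ) + 1) = insert (q j) (Q (j : ℕ)) := by
    intro j
    simp only [hQ]
    rw [show (Finset.univ.filter (fun t : Fin b => (t : ℕ) < (j : ℕ) + 1))
        = insert j (Finset.univ.filter (fun t : Fin b => (t : ℕ) < (j : ℕ))) by
      ext t
      simp only [Finset.mem_filter, Finset.mem_insert, Finset.mem_univ, true_and, Fin.ext_iff]; omega]
    rw [Finset.image_insert, Finset.union_insert]
  -- each step of adding q's costs at most g (τ j)
  have hstep : ∀ j : Fin b, F (Q ((j : ℕ) + 1)) - F (Q (j : ℕ)) ≤ g (τ j) := by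
    intro j
    rw [hQsucc j]
    have h1 : pre (τ j) ⊆ Q (j : ℕ) := (hpreG (τ j)).trans Finset.subset_union_left
    have h2 := hFsub (pre (τ j)) (Q (j : ℕ)) h1 (q j)
    have h3 := hgain j
    simp only [hg]
    linarith
  have hmain : F (G ∪ Finset.univ.image q) - F G ≤ ∑ j : Fin b, g (τ j) := by
    have : F (Q b) - F (Q 0) = ∑ k ∈ Finset.range b, (F (Q (k + 1)) - F (Q k)) := by
      rw [Finset.sum_range_sub (fun k => F (Q k))]
    rw [hQb, hQ0] at this
    rw [this, ← Fin.sum_univ_eq_sum_range (fun k => F (Q (k + 1)) - F (Q k))]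
    exact Finset.sum_le_sum fun j _ => hstep j
  -- sum of charged gains is at most Δ * F G
  have hcharge : ∑ j : Fin b, g (τ j) ≤ (Δ : ℝ) * F G := by
    have h1 : ∑ j : Fin b, g (τ j)
        = ∑ i : Fin a, ∑ j ∈ Finset.univ.filter (fun j : Fin b => τ j = i), g (τ j) := by
      rw [Finset.sum_fiberwise]
    have h2 : ∀ i : Fin a,
        ∑ j ∈ Finset.univ.filter (fun j : Fin b => τ j = i), g (τ j) ≤ (Δ : ℝ) * g i := by
      intro i
      have : ∑ j ∈ Finset.univ.filter (fun j : Fin b => τ j = i), g (τ j)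
          = ((Finset.univ.filter (fun j : Fin b => τ j = i)).card : ℝ) * g i := by
        have hc : ∀ j ∈ Finset.univ.filter (fun j : Fin b => τ j = i), g (τ j) = g i :=
          fun j hj => by rw [Finset.mem_filter] at hj; rw [hj.2]
        rw [Finset.sum_congr rfl hc, Finset.sum_const, nsmul_eq_mul]
      rw [this]
      exact mul_le_mul_of_nonneg_right (by exact_mod_cast hτ i) (hgnn i)
    calc ∑ j : Fin b, g (τ j) = _ := h1
      _ ≤ ∑ i : Fin a, (Δ : ℝ) * g i := Finset.sum_le_sum fun i _ => h2 i
      _ = (Δ : ℝ) * ∑ i : Fin a, g i := by rw [Finset.mul_sum]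
      _ = (Δ : ℝ) * F G := by rw [hsum_g]
  have := hmain.trans hcharge
  linarith
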